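/- Let g₀₀ : (0,∞) → ℝ be continuous with g₀₀(r) → 1 as r → 0⁺ and r → ∞. If min g₀₀ < 0 then g₀₀ has at least two zeros on (0,∞); if g₀₀ > 0 everywhere then it has no zeros; and there exists g₀₀ (of the noncommutative form) attaining minimum exactly 0 with a unique zero. -/

import Mathlib

open Real Filter Topology Set

/-- The lower incomplete gamma function `γ(s, x) = ∫₀^x t^(s-1) e^(-t) dt`. -/
noncomputable def lowerGamma (s x : ℝ) : ℝ := ∫ t in (0:ℝ)..x, t ^ (s - 1) * Real.exp (-t)

/-- The time-time metric coefficient of the noncommutative-geometry-inspired Schwarzschild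
solution. -/
noncomputable def g00 (θ M r : ℝ) : ℝ :=
  1 - 4 * M / (Real.sqrt π * r) * lowerGamma (3/2) (r ^ 2 / (4 * θ))

lemma cont_integrand : Continuous (fun t : ℝ => Real.sqrt t * Real.exp (-t)) :=
  Real.continuous_sqrt.mul (Real.continuous_exp.comp continuous_neg)

lemma lg_eq (x : ℝ) : lowerGamma (3/2) x = ∫ t in (0:ℝ)..x, Real.sqrt t * Real.exp (-t) := by
  unfold lowerGamma
  congr 1
  funext t
  rw [show (3:ℝ)/2 - 1 = 1/2 by norm_num, ← Real.sqrt_eq_rpow]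

lemma hasDerivAt_lg (x : ℝ) :
    HasDerivAt (fun y => lowerGamma (3/2) y) (Real.sqrt x * Real.exp (-x)) x := by
  simp_rw [lg_eq]
  exact intervalIntegral.integral_hasDerivAt_right
    (cont_integrand.intervalIntegrable _ _)
    (cont_integrand.stronglyMeasurable.stronglyMeasurableAtFilter)
    cont_integrand.continuousAt

lemma cont_lg : Continuous (fun y => lowerGamma (3/2) y) :=
  continuous_iff_continuousAt.mpr fun x => (hasDerivAt_lg x).continuousAt

lemma lg_pos {u : ℝ} (hu : 0 < u) : 0 < lowerGamma (3/2) u := by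
  rw [lg_eq]
  exact intervalIntegral.intervalIntegral_pos_of_pos_on
    (cont_integrand.intervalIntegrable _ _)
    (fun x hx => mul_pos (Real.sqrt_pos.mpr hx.1) (Real.exp_pos _)) hu

noncomputable def phiAux (u : ℝ) : ℝ :=
  lowerGamma (3/2) u - 2 * u * Real.sqrt u * Real.exp (-u)

lemma cont_phiAux : Continuous phiAux :=
  cont_lg.sub (((continuous_const.mul continuous_id).mul Real.continuous_sqrt).mul
    (Real.continuous_exp.comp continuous_neg))

lemma hasDerivAt_exp_neg (u : ℝ) :
    HasDerivAt (fun u : ℝ => Real.exp (-u)) (-Real.exp (-u)) u := by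
  simpa using (hasDerivAt_id' u).neg.exp

lemma hasDerivAt_phiAux {u : ℝ} (hu : 0 < u) :
    HasDerivAt phiAux (2 * Real.sqrt u * Real.exp (-u) * (u - 1)) u := by
  have hs : HasDerivAt Real.sqrt (1 / (2 * Real.sqrt u)) u := Real.hasDerivAt_sqrt hu.ne'
  have h1 : HasDerivAt (fun u : ℝ => 2 * u) 2 u := by
    simpa using (hasDerivAt_id u).const_mul (2:ℝ)
  have h2 := ((h1.mul hs).mul (hasDerivAt_exp_neg u))
  have h3 := (hasDerivAt_lg u).sub h2
  refine h3.congr_deriv ?_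
  have hsq : Real.sqrt u * Real.sqrt u = u := Real.mul_self_sqrt hu.le
  have hsne : Real.sqrt u ≠ 0 := (Real.sqrt_pos.mpr hu).ne'
  simp only [Pi.mul_apply]
  field_simp
  ring_nf
  nlinarith [hsq, Real.exp_pos (-u)]

lemma phiAux_zero : phiAux 0 = 0 := by
  simp [phiAux, lowerGamma, intervalIntegral.integral_same]

lemma lg_one_le : lowerGamma (3/2) 1 ≤ 1 - Real.exp (-1) := by
  rw [lg_eq]
  have h : (∫ t in (0:ℝ)..1, Real.sqrt t * Real.exp (-t)) ≤ ∫ t in (0:ℝ)..1, Real.exp (-t) := by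
    apply intervalIntegral.integral_mono_on (by norm_num)
      (cont_integrand.intervalIntegrable _ _)
      ((Real.continuous_exp.comp continuous_neg).intervalIntegrable _ _)
    intro t ht
    calc Real.sqrt t * Real.exp (-t) ≤ 1 * Real.exp (-t) :=
          mul_le_mul_of_nonneg_right (Real.sqrt_le_one.mpr ht.2) (Real.exp_pos _).le
      _ = Real.exp (-t) := one_mul _
  have h2 : (∫ t in (0:ℝ)..1, Real.exp (-t)) = 1 - Real.exp (-1) := by
    rw [intervalIntegral.integral_comp_neg (fun t => Real.exp t)]
    rw [integral_exp]
    norm_num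
  linarith

lemma lg_nine_ge : 3/8 * Real.exp (-1) ≤ lowerGamma (3/2) 9 := by
  rw [lg_eq]
  have h1 : (∫ t in (1/4:ℝ)..1, Real.sqrt t * Real.exp (-t)) ≤
      ∫ t in (0:ℝ)..9, Real.sqrt t * Real.exp (-t) := by
    apply intervalIntegral.integral_mono_interval (by norm_num) (by norm_num) (by norm_num)
    · filter_upwards with t
      exact mul_nonneg (Real.sqrt_nonneg _) (Real.exp_pos _).le
    · exact cont_integrand.intervalIntegrable _ _
  have h2 : (∫ t in (1/4:ℝ)..1, (1/2) * Real.exp (-1)) ≤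
      ∫ t in (1/4:ℝ)..1, Real.sqrt t * Real.exp (-t) := by
    apply intervalIntegral.integral_mono_on (by norm_num)
      (intervalIntegrable_const)
      (cont_integrand.intervalIntegrable _ _)
    intro t ht
    have hs : (1/2:ℝ) ≤ Real.sqrt t := by
      rw [show (1/2:ℝ) = Real.sqrt ((1/2)^2) by rw [Real.sqrt_sq]; norm_num]
      apply Real.sqrt_le_sqrt; nlinarith [ht.1]
    have he : Real.exp (-1) ≤ Real.exp (-t) := Real.exp_le_exp.mpr (by linarith [ht.2])
    have := mul_le_mul hs he (Real.exp_pos _).le (Real.sqrt_nonneg _)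
    linarith
  have h3 : (∫ t in (1/4:ℝ)..1, (1/2) * Real.exp (-1)) = 3/8 * Real.exp (-1) := by
    rw [intervalIntegral.integral_const]; norm_num; ring
  linarith

lemma phiAux_one_neg : phiAux 1 < 0 := by
  have h := lg_one_le
  have he : Real.exp 1 < 3 := by
    have := Real.exp_one_lt_d9; linarith
  have hinv : Real.exp (-1) = (Real.exp 1)⁻¹ := Real.exp_neg 1
  have hepos := Real.exp_pos 1
  have : 1 - Real.exp (-1) < 2 * Real.exp (-1) := by
    rw [hinv]
    have hid : (Real.exp 1)⁻¹ * Real.exp 1 = 1 := inv_mul_cancel₀ hepos.ne'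
    have hip : 0 < (Real.exp 1)⁻¹ := inv_pos.mpr hepos
    nlinarith
  unfold phiAux
  rw [Real.sqrt_one]
  linarith

lemma phiAux_nine_pos : 0 < phiAux 9 := by
  have h := lg_nine_ge
  have h9 : Real.sqrt 9 = 3 := by
    rw [show (9:ℝ) = 3^2 by norm_num, Real.sqrt_sq (by norm_num)]
  have key : 54 * Real.exp (-9) < 3/8 * Real.exp (-1) := by
    have h8 : Real.exp (-1) = Real.exp 8 * Real.exp (-9) := by
      rw [← Real.exp_add]; norm_num
    have he2 : (2:ℝ) < Real.exp 1 := by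
      have := Real.exp_one_gt_d9; linarith
    have hp : (2:ℝ)^8 ≤ (Real.exp 1)^8 := by
      apply pow_le_pow_left₀ (by norm_num) he2.le
    have hex8 : Real.exp 8 = (Real.exp 1)^8 := by
      rw [← Real.exp_nat_mul]; norm_num
    have h256 : (144:ℝ) < Real.exp 8 := by
      rw [hex8]; nlinarith
    have hpos := Real.exp_pos (-9)
    nlinarith
  unfold phiAux
  rw [h9]
  linarith

lemma exists_ustar : ∃ u : ℝ, 1 < u ∧ phiAux u = 0 ∧
    (∀ v, 0 < v → v < u → phiAux v < 0) ∧ (∀ v, u < v → 0 < phiAux v) := by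
  have mono : StrictMonoOn phiAux (Ici 1) := by
    apply strictMonoOn_of_deriv_pos (convex_Ici 1) cont_phiAux.continuousOn
    intro x hx
    rw [interior_Ici] at hx
    have hx0 : (0:ℝ) < x := lt_trans one_pos hx
    rw [(hasDerivAt_phiAux hx0).deriv]
    exact mul_pos (by positivity) (sub_pos.mpr hx)
  have anti : StrictAntiOn phiAux (Icc 0 1) := by
    apply strictAntiOn_of_deriv_neg (convex_Icc 0 1) cont_phiAux.continuousOn
    intro x hx
    rw [interior_Icc] at hx
    rw [(hasDerivAt_phiAux hx.1).deriv]
    have hs := Real.sqrt_pos.mpr hx.1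
    exact mul_neg_of_pos_of_neg (by positivity) (sub_neg.mpr hx.2)
  have hmem : (0:ℝ) ∈ Ioo (phiAux 1) (phiAux 9) := ⟨phiAux_one_neg, phiAux_nine_pos⟩
  obtain ⟨u, hu, hphiu⟩ :=
    intermediate_value_Ioo (by norm_num : (1:ℝ) ≤ 9) cont_phiAux.continuousOn hmem
  refine ⟨u, hu.1, hphiu, ?_, ?_⟩
  · intro v hv0 hvu
    rcases le_or_gt v 1 with hv1 | hv1
    · have := anti (left_mem_Icc.mpr zero_le_one) ⟨hv0.le, hv1⟩ hv0
      rw [phiAux_zero] at this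
      linarith
    · have := mono hv1.le hu.1.le hvu
      linarith
  · intro v hv
    have := mono hu.1.le (hu.1.le.trans hv.le) hv
    linarith

noncomputable def hfun (r : ℝ) : ℝ := 4 / (Real.sqrt π * r) * lowerGamma (3/2) (r^2/4)

lemma hasDerivAt_hfun {r : ℝ} (hr : 0 < r) :
    HasDerivAt hfun (-(4/(Real.sqrt π * r^2)) * phiAux (r^2/4)) r := by
  have heq : hfun = fun r : ℝ => 4/Real.sqrt π * (lowerGamma (3/2) (r^2/4) * r⁻¹) := by
    funext x; unfold hfun; ring
  rw [heq]
  have h1 : HasDerivAt (fun r : ℝ => r^2/4) (r/2) r := by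
    have := (hasDerivAt_pow 2 r).div_const 4
    refine this.congr_deriv ?_
    simp; ring
  have h2 : HasDerivAt (fun r : ℝ => lowerGamma (3/2) (r^2/4))
      (Real.sqrt (r^2/4) * Real.exp (-(r^2/4)) * (r/2)) r := by
    exact HasDerivAt.comp r (hasDerivAt_lg _) h1
  have h3 : HasDerivAt (fun r : ℝ => r⁻¹) (-(r^2)⁻¹) r := hasDerivAt_inv hr.ne'
  have h4 := (h2.mul h3).const_mul (4/Real.sqrt π)
  refine h4.congr_deriv ?_
  have hsq : Real.sqrt (r^2/4) = r/2 := by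
    rw [show r^2/4 = (r/2)^2 by ring, Real.sqrt_sq (by linarith)]
  rw [hsq]
  unfold phiAux
  have hπ : Real.sqrt π ≠ 0 := (Real.sqrt_pos.mpr Real.pi_pos).ne'
  have h44 : Real.sqrt 4 = 2 := by
    rw [show (4:ℝ) = 2^2 by norm_num, Real.sqrt_sq (by norm_num)]
  field_simp
  rw [hsq]
  ring
/-- A continuous `g₀₀` on `(0, ∞)` tending to `1` at `0⁺` and at `∞` has at least two zeros if
it takes a negative value, no zeros if it is everywhere positive; and there is a `g₀₀` of the
noncommutative form with minimum exactly `0` and a unique zero. -/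
theorem stmt_19 :
    (∀ g : ℝ → ℝ, ContinuousOn g (Ioi 0) →
      Tendsto g (𝓝[>] 0) (𝓝 1) → Tendsto g atTop (𝓝 1) →
      (∃ r : ℝ, 0 < r ∧ g r < 0) →
      ∃ a b : ℝ, 0 < a ∧ a < b ∧ g a = 0 ∧ g b = 0) ∧
    (∀ g : ℝ → ℝ, (∀ r : ℝ, 0 < r → 0 < g r) → ¬∃ r : ℝ, 0 < r ∧ g r = 0) ∧
    (∃ θ M : ℝ, 0 < θ ∧ 0 < M ∧
      (∀ r : ℝ, 0 < r → 0 ≤ g00 θ M r) ∧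
      (∃! r : ℝ, 0 < r ∧ g00 θ M r = 0)) := by
  refine ⟨?_, ?_, ?_⟩
  · -- Part 1: two zeros
    rintro g hcont h0 hinf ⟨r, hr, hgr⟩
    have h1 : ∀ᶠ x in 𝓝[>] (0:ℝ), 0 < g x := h0.eventually (eventually_gt_nhds one_pos)
    have h2 : Ioo (0:ℝ) r ∈ 𝓝[>] (0:ℝ) := Ioo_mem_nhdsGT_of_mem ⟨le_refl 0, hr⟩
    obtain ⟨a, hga, ha⟩ := (h1.and (eventually_mem_set.mpr h2)).exists
    have h3 : ∀ᶠ x in atTop, 0 < g x := hinf.eventually (eventually_gt_nhds one_pos)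
    obtain ⟨b, hgb, hrb⟩ := (h3.and (eventually_gt_atTop r)).exists
    have hxcont : ContinuousOn g (Icc a r) :=
      hcont.mono (fun x hx => lt_of_lt_of_le ha.1 hx.1)
    have hycont : ContinuousOn g (Icc r b) :=
      hcont.mono (fun x hx => lt_of_lt_of_le hr hx.1)
    obtain ⟨x, hx, hgx⟩ := intermediate_value_Icc' ha.2.le hxcont ⟨hgr.le, hga.le⟩
    obtain ⟨y, hy, hgy⟩ := intermediate_value_Icc hrb.le hycont ⟨hgr.le, hgb.le⟩
    refine ⟨x, y, lt_of_lt_of_le ha.1 hx.1, ?_, hgx, hgy⟩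
    have hxr : x < r := lt_of_le_of_ne hx.2 (fun h => by rw [h] at hgx; linarith)
    have hry : r < y := lt_of_le_of_ne hy.1 (fun h => by rw [← h] at hgy; linarith)
    linarith
  · -- Part 2: no zeros
    rintro g hpos ⟨r, hr, hgr⟩
    exact absurd hgr (ne_of_gt (hpos r hr))
  · -- Part 3: extremal case
    obtain ⟨u, hu1, hphiu, hneg, hpos⟩ := exists_ustar
    have hu0 : (0:ℝ) < u := lt_trans one_pos hu1
    set r₀ : ℝ := 2 * Real.sqrt u with hr₀def
    have hsu : 0 < Real.sqrt u := Real.sqrt_pos.mpr hu0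
    have hr₀ : 0 < r₀ := by positivity
    have hueq : r₀^2/4 = u := by
      rw [hr₀def, mul_pow, Real.sq_sqrt hu0.le]; ring
    have hπ : 0 < Real.sqrt π := Real.sqrt_pos.mpr Real.pi_pos
    have mono : StrictMonoOn hfun (Ioc 0 r₀) := by
      apply strictMonoOn_of_deriv_pos (convex_Ioc 0 r₀)
        (fun r hrm => ((hasDerivAt_hfun hrm.1).continuousAt).continuousWithinAt)
      intro r hrm
      rw [interior_Ioc] at hrm
      rw [(hasDerivAt_hfun hrm.1).deriv]
      have hphin : phiAux (r^2/4) < 0 := by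
        apply hneg _ (div_pos (pow_pos hrm.1 2) (by norm_num))
        rw [← hueq]
        have : r^2 < r₀^2 := by nlinarith [hrm.1, hrm.2]
        linarith
      have hc : 0 < 4/(Real.sqrt π * r^2) :=
        div_pos (by norm_num) (mul_pos hπ (pow_pos hrm.1 2))
      exact mul_pos_of_neg_of_neg (by linarith) hphin
    have anti : StrictAntiOn hfun (Ici r₀) := by
      apply strictAntiOn_of_deriv_neg (convex_Ici r₀)
        (fun r hrm => ((hasDerivAt_hfun (lt_of_lt_of_le hr₀ hrm)).continuousAt).continuousWithinAt)
      intro r hrm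
      rw [interior_Ici] at hrm
      have hrpos : 0 < r := lt_trans hr₀ hrm
      rw [(hasDerivAt_hfun hrpos).deriv]
      have hphip : 0 < phiAux (r^2/4) := by
        apply hpos
        rw [← hueq]
        have : r₀^2 < r^2 := by
          nlinarith [mul_pos (sub_pos.mpr hrm) (by linarith : (0:ℝ) < r + r₀)]
        linarith
      have hc : 0 < 4/(Real.sqrt π * r^2) :=
        div_pos (by norm_num) (mul_pos hπ (pow_pos hrpos 2))
      exact mul_neg_of_neg_of_pos (by linarith) hphip
    have hmax : ∀ r : ℝ, 0 < r → r ≠ r₀ → hfun r < hfun r₀ := by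
      intro r hrp hne
      rcases lt_or_gt_of_ne hne with h | h
      · exact mono ⟨hrp, h.le⟩ ⟨hr₀, le_refl _⟩ h
      · exact anti (self_mem_Ici) h.le h
    have hfr₀pos : 0 < hfun r₀ := by
      unfold hfun
      apply mul_pos (by positivity)
      rw [hueq]
      exact lg_pos hu0
    refine ⟨1, (hfun r₀)⁻¹, one_pos, inv_pos.mpr hfr₀pos, ?_, ?_⟩
    · intro r hrp
      have hg : g00 1 (hfun r₀)⁻¹ r = 1 - (hfun r₀)⁻¹ * hfun r := by
        unfold g00 hfun; norm_num; ring
      rw [hg]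
      rcases eq_or_ne r r₀ with h | h
      · rw [h, inv_mul_cancel₀ hfr₀pos.ne']; norm_num
      · have hlt := hmax r hrp h
        have := mul_lt_mul_of_pos_left hlt (inv_pos.mpr hfr₀pos)
        rw [inv_mul_cancel₀ hfr₀pos.ne'] at this
        linarith
    · refine ⟨r₀, ⟨hr₀, ?_⟩, ?_⟩
      · have hg : g00 1 (hfun r₀)⁻¹ r₀ = 1 - (hfun r₀)⁻¹ * hfun r₀ := by
          unfold g00 hfun; norm_num; ring
        rw [hg, inv_mul_cancel₀ hfr₀pos.ne']; norm_num
      · rintro r ⟨hrp, hgr⟩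
        by_contra hne
        have hg : g00 1 (hfun r₀)⁻¹ r = 1 - (hfun r₀)⁻¹ * hfun r := by
          unfold g00 hfun; norm_num; ring
        rw [hg] at hgr
        have hlt := hmax r hrp hne
        have := mul_lt_mul_of_pos_left hlt (inv_pos.mpr hfr₀pos)
        rw [inv_mul_cancel₀ hfr₀pos.ne'] at this
        linarith
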